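/- Define P(Z, Z') = (det_ℂ 𝒥 / (2π)^n) · exp(−(1/4)⟨|𝒥|(Z−Z'), Z−Z'⟩ + (1/2)⟨𝒥 Z, Z'⟩) for Z, Z' ∈ ℝ^{2n}, where 𝒥 is a skew-adjoint invertible endomorphism of ℝ^{2n} with |𝒥| = (−𝒥²)^{1/2} and det_ℂ 𝒥 denotes the product of the positive eigenvalues a_j of |𝒥| (each counted once). Then P(0,0) = det_ℂ 𝒥 / (2π)^n, and P is a reproducing kernel: ∫_{ℝ^{2n}} P(Z, W) P(W, Z') dW = P(Z, Z'). -/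

import Mathlib

open Finset MeasureTheory

open Matrix Complex


namespace Stmt8Aux

variable {N : ℕ}

lemma eq_zero_of_anticommute (A C : Matrix (Fin N) (Fin N) ℝ) (hA : A.PosDef)
    (h : A * C + C * A = 0) : C = 0 := by
  have hH := hA.1
  set U : Matrix (Fin N) (Fin N) ℝ := (hH.eigenvectorUnitary : Matrix (Fin N) (Fin N) ℝ) with hUdef
  have hUU : U * star U = 1 := mem_unitaryGroup_iff.mp hH.eigenvectorUnitary.2
  have hUU' : star U * U = 1 := mem_unitaryGroup_iff'.mp hH.eigenvectorUnitary.2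
  have hspec : star U * A * U = diagonal (RCLike.ofReal ∘ hH.eigenvalues) :=
    by have := hH.conjStarAlgAut_star_eigenvectorUnitary
       rwa [Unitary.conjStarAlgAut_apply, Unitary.coe_star, star_star] at this
  set M : Matrix (Fin N) (Fin N) ℝ := star U * C * U with hMdef
  have key : diagonal (RCLike.ofReal ∘ hH.eigenvalues) * M
      + M * diagonal (RCLike.ofReal ∘ hH.eigenvalues) = 0 := by
    rw [← hspec]
    have : star U * A * U * M + M * (star U * A * U)
        = star U * (A * C + C * A) * U := by
      rw [hMdef]
      calc star U * A * U * (star U * C * U) + star U * C * U * (star U * A * U)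
          = star U * A * (U * star U) * C * U + star U * C * (U * star U) * A * U := by
            noncomm_ring
        _ = star U * (A * C + C * A) * U := by rw [hUU]; noncomm_ring
    rw [this, h, mul_zero, zero_mul]
  have hM : M = 0 := by
    ext i j
    have := congrFun (congrFun key i) j
    simp only [Matrix.add_apply, Matrix.diagonal_mul, Matrix.mul_diagonal,
      Matrix.zero_apply, Function.comp_apply, RCLike.ofReal_real_eq_id, id_eq] at this
    have hpos : 0 < hH.eigenvalues i + hH.eigenvalues j :=
      add_pos (hA.eigenvalues_pos i) (hA.eigenvalues_pos j)
    have : (hH.eigenvalues i + hH.eigenvalues j) * M i j = 0 := by linarith [this]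
    simpa [hpos.ne'] using this
  have : C = U * M * star U := by
    rw [hMdef]
    calc C = (U * star U) * C * (U * star U) := by rw [hUU]; noncomm_ring
      _ = U * (star U * C * U) * star U := by noncomm_ring
  rw [this, hM, mul_zero, zero_mul]

lemma commute_of_sq (A J : Matrix (Fin N) (Fin N) ℝ) (hA : A.PosDef)
    (h : A * A = -(J * J)) : A * J = J * A := by
  have h2 : A * (A * J - J * A) + (A * J - J * A) * A = 0 := by
    have : A * A * J = J * (A * A) := by rw [h]; noncomm_ring
    noncomm_ring
    linear_combination (norm := noncomm_ring) this
  have := eq_zero_of_anticommute A (A * J - J * A) hA h2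
  linear_combination (norm := noncomm_ring) this

end Stmt8Aux

noncomputable section

lemma gauss_int (A : Matrix (Fin N) (Fin N) ℝ) (hA : A.PosDef) (c : Fin N → ℂ) :
    ∫ w : EuclideanSpace ℝ (Fin N),
      Complex.exp ((↑(-(1/2 : ℝ) * (A *ᵥ w ⬝ᵥ w)) : ℂ) + ∑ i, c i * w i)
      = (↑(Real.sqrt ((2*Real.pi)^N / A.det)) : ℂ) *
        Complex.exp ((1/2 : ℂ) * (((A⁻¹).map (fun x : ℝ => (x : ℂ))) *ᵥ c ⬝ᵥ c)) := by
  classical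
  have hH := hA.1
  set U : Matrix (Fin N) (Fin N) ℝ := (hH.eigenvectorUnitary : Matrix (Fin N) (Fin N) ℝ) with hUdef
  set d : Fin N → ℝ := hH.eigenvalues with hddef
  have hdpos : ∀ i, 0 < d i := fun i => hA.eigenvalues_pos i
  have hUU : U * star U = 1 := mem_unitaryGroup_iff.mp hH.eigenvectorUnitary.2
  have hUU' : star U * U = 1 := mem_unitaryGroup_iff'.mp hH.eigenvectorUnitary.2
  have hstar : star U = Uᵀ := by
    rw [Matrix.star_eq_conjTranspose, Matrix.conjTranspose_eq_transpose_of_trivial]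
  have hspec : Uᵀ * A * U = Matrix.diagonal d := by
    have := hH.conjStarAlgAut_star_eigenvectorUnitary
    rw [Unitary.conjStarAlgAut_apply, Unitary.coe_star, star_star, ← hUdef, hstar] at this
    exact this
  have hAspec : A = U * Matrix.diagonal d * Uᵀ := by
    have := hH.spectral_theorem
    rw [Unitary.conjStarAlgAut_apply, ← hUdef, hstar] at this
    exact this
  have hUtU : Uᵀ * U = 1 := by rw [← hstar]; exact hUU'
  have hUUt : U * Uᵀ = 1 := by rw [← hstar]; exact hUU
  have hDDi : Matrix.diagonal d * Matrix.diagonal (fun i => (d i)⁻¹) = 1 := by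
    rw [Matrix.diagonal_mul_diagonal]
    have : (fun i => d i * (d i)⁻¹) = fun _ => (1:ℝ) := by
      funext i; exact mul_inv_cancel₀ (hdpos i).ne'
    rw [this, Matrix.diagonal_one]
  have hAinv : A⁻¹ = U * Matrix.diagonal (fun i => (d i)⁻¹) * Uᵀ := by
    apply Matrix.inv_eq_right_inv
    calc A * (U * Matrix.diagonal (fun i => (d i)⁻¹) * Uᵀ)
        = U * (Matrix.diagonal d * ((Uᵀ * U) * Matrix.diagonal (fun i => (d i)⁻¹))) * Uᵀ := by
          rw [hAspec]; noncomm_ring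
      _ = 1 := by rw [hUtU, one_mul, hDDi, mul_one, hUUt]
  -- the orthonormal eigenbasis as change of variables
  set b := hH.eigenvectorBasis with hbdef
  have hrepr : ∀ v : EuclideanSpace ℝ (Fin N), ∀ j, (b.repr.symm v) j = (U *ᵥ v) j := by
    intro v j
    rw [← b.sum_repr_symm]
    have : (∑ i, v i • b i) j = ∑ i, v i * b i j := by
      rw [WithLp.ofLp_sum, Finset.sum_apply]
      simp
    rw [this, Matrix.mulVec, dotProduct]
    congr 1; funext i
    rw [mul_comm]
    congr 1
  set cU : Fin N → ℂ := fun i => ∑ j, c j * (U j i : ℂ) with hcU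
  have hquad : ∀ v : Fin N → ℝ, A *ᵥ (U *ᵥ v) ⬝ᵥ (U *ᵥ v) = ∑ i, d i * v i ^ 2 := by
    intro v
    calc A *ᵥ (U *ᵥ v) ⬝ᵥ (U *ᵥ v)
        = ((A * U) *ᵥ v) ⬝ᵥ (U *ᵥ v) := by rw [Matrix.mulVec_mulVec]
      _ = (((A * U) *ᵥ v) ᵥ* U) ⬝ᵥ v := by rw [Matrix.dotProduct_mulVec]
      _ = (Uᵀ *ᵥ ((A * U) *ᵥ v)) ⬝ᵥ v := by rw [Matrix.mulVec_transpose]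
      _ = ((Uᵀ * (A * U)) *ᵥ v) ⬝ᵥ v := by rw [Matrix.mulVec_mulVec]
      _ = (Matrix.diagonal d *ᵥ v) ⬝ᵥ v := by rw [← Matrix.mul_assoc, hspec]
      _ = ∑ i, d i * v i ^ 2 := by
          simp only [dotProduct, Matrix.mulVec_diagonal, sq]
          congr 1; funext i; ring
  have hlin : ∀ v : Fin N → ℝ, ∑ i, c i * ((U *ᵥ v) i : ℂ) = ∑ i, cU i * v i := by
    intro v
    simp only [Matrix.mulVec, dotProduct]
    push_cast
    simp only [Finset.mul_sum, Finset.sum_mul]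
    rw [Finset.sum_comm]
    simp only [hcU, Finset.sum_mul, mul_assoc]
  have hbre : ∀ i, 0 < ((d i / 2 : ℝ) : ℂ).re := by
    intro i; simp only [Complex.ofReal_re]; exact div_pos (hdpos i) two_pos
  -- change of variables
  rw [← (b.measurePreserving_repr_symm).integral_comp
    b.repr.symm.toHomeomorph.measurableEmbedding
    (fun w : EuclideanSpace ℝ (Fin N) =>
      Complex.exp ((↑(-(1/2 : ℝ) * (A *ᵥ w ⬝ᵥ w)) : ℂ) + ∑ i, c i * w i))]
  have hfun : ∀ v : EuclideanSpace ℝ (Fin N),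
      Complex.exp ((↑(-(1/2 : ℝ) * (A *ᵥ (b.repr.symm v) ⬝ᵥ (b.repr.symm v))) : ℂ)
        + ∑ i, c i * ((b.repr.symm v) i : ℂ))
      = Complex.exp (-∑ i, ((d i / 2 : ℝ) : ℂ) * (v i : ℂ) ^ 2 + ∑ i, cU i * v i) := by
    intro v
    have hcoe : ∀ j, (b.repr.symm v) j = (U *ᵥ v) j := hrepr v
    have hcoe' : (b.repr.symm v : EuclideanSpace ℝ (Fin N)) = (U *ᵥ v : Fin N → ℝ) :=
      funext hcoe
    rw [hcoe', hquad, hlin]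
    congr 1
    push_cast
    congr 1
    rw [Finset.mul_sum, ← Finset.sum_neg_distrib]
    exact Finset.sum_congr rfl fun i _ => by ring
  simp only [hfun]
  -- move to the product measure
  rw [← ((EuclideanSpace.volume_preserving_symm_measurableEquiv_toLp (Fin N)).symm _).integral_comp
    (MeasurableEquiv.measurableEmbedding _)
    (fun v : EuclideanSpace ℝ (Fin N) =>
      Complex.exp (-∑ i, ((d i / 2 : ℝ) : ℂ) * (v i : ℂ) ^ 2 + ∑ i, cU i * v i))]
  have hgauss := GaussianFourier.integral_cexp_neg_sum_mul_add (b := fun i => ((d i / 2 : ℝ) : ℂ)) hbre cU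
  have heq : ∀ v : Fin N → ℝ,
      Complex.exp (-∑ i, ((d i / 2 : ℝ) : ℂ)
          * (((MeasurableEquiv.toLp 2 (Fin N → ℝ)).symm.symm v) i : ℂ) ^ 2
        + ∑ i, cU i * (((MeasurableEquiv.toLp 2 (Fin N → ℝ)).symm.symm v) i : ℂ))
      = Complex.exp (-∑ i, ((d i / 2 : ℝ) : ℂ) * (v i : ℂ) ^ 2 + ∑ i, cU i * v i) := by
    intro v; rfl
  simp only [heq]
  rw [hgauss]
  -- evaluate the product
  rw [Finset.prod_mul_distrib, ← Complex.exp_sum]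
  congr 1
  · -- prefactor
    have hfac : ∀ i : Fin N, ((Real.pi : ℂ) / ((d i / 2 : ℝ) : ℂ)) ^ (1/2 : ℂ)
        = ((Real.sqrt (2 * Real.pi / d i) : ℝ) : ℂ) := by
      intro i
      have h1 : ((Real.pi : ℂ) / ((d i / 2 : ℝ) : ℂ)) = ((2 * Real.pi / d i : ℝ) : ℂ) := by
        push_cast
        rw [div_div_eq_mul_div]
        ring_nf
      rw [h1, Real.sqrt_eq_rpow, Complex.ofReal_cpow (by have := hdpos i; positivity)]
      norm_num
    simp only [hfac]
    rw [← Complex.ofReal_prod]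
    congr 1
    simp_rw [Real.sqrt_eq_rpow]
    rw [Real.finset_prod_rpow _ _ (fun i _ => by have := hdpos i; positivity) _]
    congr 1
    rw [Finset.prod_div_distrib, Finset.prod_const]
    congr 1
    · simp
    · rw [hH.det_eq_prod_eigenvalues]
      norm_num
      rfl
  · -- exponent
    have hBinv : (A⁻¹).map (fun x : ℝ => (x : ℂ))
        = U.map (fun x : ℝ => (x : ℂ)) * Matrix.diagonal (fun i => ((d i)⁻¹ : ℂ))
          * (U.map (fun x : ℝ => (x : ℂ)))ᵀ := by
      rw [hAinv]
      have hmap : ∀ (M P : Matrix (Fin N) (Fin N) ℝ),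
          (M * P).map (fun x : ℝ => (x : ℂ))
            = M.map (fun x : ℝ => (x : ℂ)) * P.map (fun x : ℝ => (x : ℂ)) :=
        fun M P => Matrix.map_mul (f := Complex.ofRealHom)
      rw [hmap, hmap, Matrix.transpose_map]
      congr 2
      rw [Matrix.diagonal_map (by simp)]
      congr 1
      funext i
      simp
    rw [hBinv]
    set Uc := U.map (fun x : ℝ => (x : ℂ)) with hUc
    have hUcc : ∀ v : Fin N → ℂ,
        (Uc * Matrix.diagonal (fun i => ((d i)⁻¹ : ℂ)) * Ucᵀ) *ᵥ v ⬝ᵥ v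
        = ∑ i, ((d i : ℂ))⁻¹ * (Ucᵀ *ᵥ v) i ^ 2 := by
      intro v
      calc (Uc * Matrix.diagonal (fun i => ((d i)⁻¹ : ℂ)) * Ucᵀ) *ᵥ v ⬝ᵥ v
          = (Uc *ᵥ ((Matrix.diagonal (fun i => ((d i)⁻¹ : ℂ)) * Ucᵀ) *ᵥ v)) ⬝ᵥ v := by
            rw [Matrix.mulVec_mulVec, Matrix.mul_assoc]
        _ = v ⬝ᵥ (Uc *ᵥ ((Matrix.diagonal (fun i => ((d i)⁻¹ : ℂ)) * Ucᵀ) *ᵥ v)) := by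
            rw [dotProduct_comm]
        _ = (v ᵥ* Uc) ⬝ᵥ ((Matrix.diagonal (fun i => ((d i)⁻¹ : ℂ)) * Ucᵀ) *ᵥ v) := by
            rw [Matrix.dotProduct_mulVec]
        _ = (Ucᵀ *ᵥ v) ⬝ᵥ (Matrix.diagonal (fun i => ((d i)⁻¹ : ℂ)) *ᵥ (Ucᵀ *ᵥ v)) := by
            rw [← Matrix.mulVec_mulVec, Matrix.mulVec_transpose]
        _ = ∑ i, ((d i : ℂ))⁻¹ * (Ucᵀ *ᵥ v) i ^ 2 := by
            simp only [dotProduct, Matrix.mulVec_diagonal, sq]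
            congr 1; funext i; ring
    rw [hUcc]
    have hyi : ∀ i, (Ucᵀ *ᵥ c) i = cU i := by
      intro i
      simp only [hUc, hcU, Matrix.mulVec, dotProduct, Matrix.transpose_apply,
        Matrix.map_apply]
      congr 1; funext j; ring
    rw [Finset.mul_sum]
    congr 1
    refine Finset.sum_congr rfl fun i _ => ?_
    rw [hyi]
    have hd : (d i : ℂ) ≠ 0 := by
      simp only [ne_eq, Complex.ofReal_eq_zero]
      exact (hdpos i).ne'
    push_cast
    field_simp
    ring

end

/-- The model Bergman kernel (equation (ue62)):
`P(Z,Z') = (det_ℂ 𝒥/(2π)^n) exp(−(1/4)⟨|𝒥|(Z−Z'),Z−Z'⟩ + (1/2)⟨𝒥Z,Z'⟩)`, where `𝒥` is real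
skew-adjoint and invertible, `|𝒥| = (−𝒥²)^{1/2}`, `det_ℂ 𝒥 = √(det |𝒥|)` is the product of
the positive eigenvalues `a_j` of `|𝒥|`, and the skew term `⟨𝒥Z,Z'⟩` contributes a phase
(it enters with the factor `√−1` coming from `𝒥 = −2π√−1 𝐉`). Then `P(0,0) = det_ℂ 𝒥/(2π)^n`
and `P` is a reproducing kernel: `∫ P(Z,W)P(W,Z') dW = P(Z,Z')`. -/
theorem stmt_8 (n : ℕ) (Jc absJ : Matrix (Fin (2 * n)) (Fin (2 * n)) ℝ)
    (hskew : Jc.transpose = -Jc) (hinv : IsUnit Jc)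
    (habs : absJ * absJ = -(Jc * Jc)) (hpos : absJ.PosDef)
    (P : EuclideanSpace ℝ (Fin (2 * n)) → EuclideanSpace ℝ (Fin (2 * n)) → ℂ)
    (hP : ∀ Z Z' : EuclideanSpace ℝ (Fin (2 * n)), P Z Z' =
      (↑(Real.sqrt absJ.det / (2 * Real.pi) ^ n) : ℂ) *
        Complex.exp
          ((↑(-(1 / 4) * ∑ i, (∑ j, absJ i j * (Z - Z') j) * (Z - Z') i) : ℂ) +
            (1 / 2) * Complex.I * (↑(∑ i, (∑ j, Jc i j * Z j) * Z' i) : ℂ))) :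
    P 0 0 = (↑(Real.sqrt absJ.det / (2 * Real.pi) ^ n) : ℂ) ∧
    ∀ Z Z' : EuclideanSpace ℝ (Fin (2 * n)),
      (∫ W : EuclideanSpace ℝ (Fin (2 * n)), P Z W * P W Z') = P Z Z' := by
  classical
  have hdet : (0:ℝ) < absJ.det := hpos.det_pos
  have hdetU : IsUnit absJ.det := (ne_of_gt hdet).isUnit
  have hAT : absJᵀ = absJ := by
    have := hpos.1
    rwa [Matrix.IsHermitian, Matrix.conjTranspose_eq_transpose_of_trivial] at this
  have hcomm : absJ * Jc = Jc * absJ := Stmt8Aux.commute_of_sq absJ Jc hpos habs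

  have hsym : ∀ x y : Fin (2*n) → ℝ, absJ *ᵥ x ⬝ᵥ y = absJ *ᵥ y ⬝ᵥ x := by
    intro x y
    rw [dotProduct_comm, Matrix.dotProduct_mulVec, ← Matrix.mulVec_transpose, hAT]
  have hAinvT : (absJ⁻¹)ᵀ = absJ⁻¹ := by
    rw [Matrix.transpose_nonsing_inv, hAT]
  have hsymInv : ∀ x y : Fin (2*n) → ℝ, absJ⁻¹ *ᵥ x ⬝ᵥ y = absJ⁻¹ *ᵥ y ⬝ᵥ x := by
    intro x y
    rw [dotProduct_comm, Matrix.dotProduct_mulVec, ← Matrix.mulVec_transpose, hAinvT]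
  have hskewd : ∀ x w : Fin (2*n) → ℝ, x ⬝ᵥ (Jc *ᵥ w) = -((Jc *ᵥ x) ⬝ᵥ w) := by
    intro x w
    rw [Matrix.dotProduct_mulVec, ← Matrix.mulVec_transpose, hskew, Matrix.neg_mulVec,
      neg_dotProduct]
  have hzero : ∀ x : Fin (2*n) → ℝ, x ⬝ᵥ (Jc *ᵥ x) = 0 := by
    intro x
    have h := hskewd x x
    rw [dotProduct_comm (Jc *ᵥ x) x] at h
    linarith
  have hAiJ : absJ⁻¹ * Jc = Jc * absJ⁻¹ := by
    calc absJ⁻¹ * Jc = absJ⁻¹ * Jc * (absJ * absJ⁻¹) := by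
          rw [Matrix.mul_nonsing_inv _ hdetU, mul_one]
      _ = absJ⁻¹ * (Jc * absJ) * absJ⁻¹ := by noncomm_ring
      _ = absJ⁻¹ * (absJ * Jc) * absJ⁻¹ := by rw [hcomm]
      _ = (absJ⁻¹ * absJ) * (Jc * absJ⁻¹) := by noncomm_ring
      _ = Jc * absJ⁻¹ := by rw [Matrix.nonsing_inv_mul _ hdetU, one_mul]
  have hJAJ : Jcᵀ * (absJ⁻¹ * Jc) = absJ := by
    rw [hskew, hAiJ]
    calc (-Jc) * (Jc * absJ⁻¹) = -(Jc * Jc) * absJ⁻¹ := by noncomm_ring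
      _ = (absJ * absJ) * absJ⁻¹ := by rw [← habs]
      _ = absJ := by rw [Matrix.mul_assoc, Matrix.mul_nonsing_inv _ hdetU, mul_one]
  constructor
  · rw [hP]
    simp
  intro Z Z'
  set Zf : Fin (2*n) → ℝ := fun j => Z j with hZf
  set Z'f : Fin (2*n) → ℝ := fun j => Z' j with hZ'f
  set u : Fin (2*n) → ℝ := (2:ℝ)⁻¹ • (absJ *ᵥ (Zf + Z'f)) with hu
  set yv : Fin (2*n) → ℝ := (2:ℝ)⁻¹ • (Jc *ᵥ (Zf - Z'f)) with hy
  set cv : Fin (2*n) → ℂ := fun i => (u i : ℂ) + Complex.I * (yv i : ℂ) with hc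
  set K : ℝ := Real.sqrt absJ.det / (2 * Real.pi) ^ n with hK
  have hqsub : ∀ x y : Fin (2*n) → ℝ, absJ *ᵥ (x - y) ⬝ᵥ (x - y)
      = absJ *ᵥ x ⬝ᵥ x - 2*(absJ *ᵥ x ⬝ᵥ y) + absJ *ᵥ y ⬝ᵥ y := by
    intro x y
    rw [Matrix.mulVec_sub, sub_dotProduct, dotProduct_sub,
      dotProduct_sub, hsym y x]
    ring
  have hqadd : ∀ x y : Fin (2*n) → ℝ, absJ *ᵥ (x + y) ⬝ᵥ (x + y)
      = absJ *ᵥ x ⬝ᵥ x + 2*(absJ *ᵥ x ⬝ᵥ y) + absJ *ᵥ y ⬝ᵥ y := by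
    intro x y
    rw [Matrix.mulVec_add, add_dotProduct, dotProduct_add,
      dotProduct_add, hsym y x]
    ring
  -- pointwise rewriting of the product of kernels
  have hpoint : ∀ W : EuclideanSpace ℝ (Fin (2*n)), P Z W * P W Z' =
      ((K:ℂ)^2 * Complex.exp
          (↑(-(1/4) * (absJ *ᵥ Zf ⬝ᵥ Zf + absJ *ᵥ Z'f ⬝ᵥ Z'f)) : ℂ))
        * Complex.exp ((↑(-(1/2 : ℝ) * (absJ *ᵥ W ⬝ᵥ W)) : ℂ) + ∑ i, cv i * W i) := by
    intro W
    set Wf : Fin (2*n) → ℝ := fun j => W j with hWf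
    have h1 : P Z W = (K:ℂ) * Complex.exp
        ((↑(-(1/4) * (absJ *ᵥ (Zf - Wf) ⬝ᵥ (Zf - Wf))) : ℂ)
          + (1/2) * Complex.I * (↑(Jc *ᵥ Zf ⬝ᵥ Wf) : ℂ)) := by
      rw [hP Z W]; rfl
    have h2 : P W Z' = (K:ℂ) * Complex.exp
        ((↑(-(1/4) * (absJ *ᵥ (Wf - Z'f) ⬝ᵥ (Wf - Z'f))) : ℂ)
          + (1/2) * Complex.I * (↑(Jc *ᵥ Wf ⬝ᵥ Z'f) : ℂ)) := by
      rw [hP W Z']; rfl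
    have hW : ∀ i, (W i : ℂ) = (Wf i : ℂ) := fun i => rfl
    have hsum : ∑ i, cv i * (W i : ℂ)
        = (↑(u ⬝ᵥ Wf) : ℂ) + Complex.I * (↑(yv ⬝ᵥ Wf) : ℂ) := by
      simp only [hc, add_mul, Finset.sum_add_distrib]
      congr 1
      · rw [dotProduct]; push_cast; rfl
      · rw [dotProduct]; push_cast
        rw [Finset.mul_sum]
        exact Finset.sum_congr rfl fun i _ => by ring
    have hR1 : -(1/4) * (absJ *ᵥ (Zf - Wf) ⬝ᵥ (Zf - Wf))
        + -(1/4) * (absJ *ᵥ (Wf - Z'f) ⬝ᵥ (Wf - Z'f))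
        = -(1/4) * (absJ *ᵥ Zf ⬝ᵥ Zf + absJ *ᵥ Z'f ⬝ᵥ Z'f)
          + (-(1/2) * (absJ *ᵥ Wf ⬝ᵥ Wf) + u ⬝ᵥ Wf) := by
      rw [hqsub, hqsub, hu, smul_dotProduct, Matrix.mulVec_add,
        add_dotProduct, hsym Z'f Wf, hsym Wf Z'f]
      simp only [smul_eq_mul]
      ring
    have hR2 : (1/2 : ℝ) * (Jc *ᵥ Zf ⬝ᵥ Wf) + (1/2) * (Jc *ᵥ Wf ⬝ᵥ Z'f) = yv ⬝ᵥ Wf := by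
      have e1 : Jc *ᵥ Wf ⬝ᵥ Z'f = -(Jc *ᵥ Z'f ⬝ᵥ Wf) := by
        rw [dotProduct_comm, hskewd]
      rw [e1, hy, smul_dotProduct, Matrix.mulVec_sub, sub_dotProduct]
      simp only [smul_eq_mul]
      ring
    rw [h1, h2]
    have hexp : (↑(-(1/4) * (absJ *ᵥ (Zf - Wf) ⬝ᵥ (Zf - Wf))) : ℂ)
          + (1/2) * Complex.I * (↑(Jc *ᵥ Zf ⬝ᵥ Wf) : ℂ)
        + ((↑(-(1/4) * (absJ *ᵥ (Wf - Z'f) ⬝ᵥ (Wf - Z'f))) : ℂ)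
          + (1/2) * Complex.I * (↑(Jc *ᵥ Wf ⬝ᵥ Z'f) : ℂ))
        = (↑(-(1/4) * (absJ *ᵥ Zf ⬝ᵥ Zf + absJ *ᵥ Z'f ⬝ᵥ Z'f)) : ℂ)
          + ((↑(-(1/2 : ℝ) * (absJ *ᵥ Wf ⬝ᵥ Wf)) : ℂ)
            + ((↑(u ⬝ᵥ Wf) : ℂ) + Complex.I * (↑(yv ⬝ᵥ Wf) : ℂ))) := by
      have hR1' : ((-(1/4) * (absJ *ᵥ (Zf - Wf) ⬝ᵥ (Zf - Wf))
          + -(1/4) * (absJ *ᵥ (Wf - Z'f) ⬝ᵥ (Wf - Z'f)) : ℝ) : ℂ)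
          = ((-(1/4) * (absJ *ᵥ Zf ⬝ᵥ Zf + absJ *ᵥ Z'f ⬝ᵥ Z'f)
            + (-(1/2) * (absJ *ᵥ Wf ⬝ᵥ Wf) + u ⬝ᵥ Wf) : ℝ) : ℂ) :=
        Complex.ofReal_inj.mpr hR1
      have hR2' : (((1/2 : ℝ) * (Jc *ᵥ Zf ⬝ᵥ Wf) + (1/2) * (Jc *ᵥ Wf ⬝ᵥ Z'f) : ℝ) : ℂ)
          = ((yv ⬝ᵥ Wf : ℝ) : ℂ) := Complex.ofReal_inj.mpr hR2
      push_cast at hR1' hR2' ⊢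
      linear_combination hR1' + Complex.I * hR2'
    calc (K:ℂ) * Complex.exp _ * ((K:ℂ) * Complex.exp _)
        = (K:ℂ)^2 * Complex.exp
            ((↑(-(1/4) * (absJ *ᵥ (Zf - Wf) ⬝ᵥ (Zf - Wf))) : ℂ)
              + (1/2) * Complex.I * (↑(Jc *ᵥ Zf ⬝ᵥ Wf) : ℂ)
            + ((↑(-(1/4) * (absJ *ᵥ (Wf - Z'f) ⬝ᵥ (Wf - Z'f))) : ℂ)
              + (1/2) * Complex.I * (↑(Jc *ᵥ Wf ⬝ᵥ Z'f) : ℂ))) := by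
          rw [mul_mul_mul_comm, ← Complex.exp_add, sq]
      _ = (K:ℂ)^2 * Complex.exp
            ((↑(-(1/4) * (absJ *ᵥ Zf ⬝ᵥ Zf + absJ *ᵥ Z'f ⬝ᵥ Z'f)) : ℂ)
              + ((↑(-(1/2 : ℝ) * (absJ *ᵥ Wf ⬝ᵥ Wf)) : ℂ)
                + ((↑(u ⬝ᵥ Wf) : ℂ) + Complex.I * (↑(yv ⬝ᵥ Wf) : ℂ)))) := by rw [hexp]
      _ = ((K:ℂ)^2 * Complex.exp
            (↑(-(1/4) * (absJ *ᵥ Zf ⬝ᵥ Zf + absJ *ᵥ Z'f ⬝ᵥ Z'f)) : ℂ))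
          * Complex.exp ((↑(-(1/2 : ℝ) * (absJ *ᵥ Wf ⬝ᵥ Wf)) : ℂ)
              + ((↑(u ⬝ᵥ Wf) : ℂ) + Complex.I * (↑(yv ⬝ᵥ Wf) : ℂ))) := by
          rw [Complex.exp_add, mul_assoc]
      _ = ((K:ℂ)^2 * Complex.exp
            (↑(-(1/4) * (absJ *ᵥ Zf ⬝ᵥ Zf + absJ *ᵥ Z'f ⬝ᵥ Z'f)) : ℂ))
          * Complex.exp ((↑(-(1/2 : ℝ) * (absJ *ᵥ W ⬝ᵥ W)) : ℂ) + ∑ i, cv i * W i) := by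
          rw [hsum]
  -- integrate using the Gaussian integral lemma
  have hint : (∫ W : EuclideanSpace ℝ (Fin (2*n)), P Z W * P W Z')
      = ((K:ℂ)^2 * Complex.exp
          (↑(-(1/4) * (absJ *ᵥ Zf ⬝ᵥ Zf + absJ *ᵥ Z'f ⬝ᵥ Z'f)) : ℂ))
        * ((↑(Real.sqrt ((2*Real.pi)^(2*n) / absJ.det)) : ℂ) *
           Complex.exp ((1/2 : ℂ) * (((absJ⁻¹).map (fun x : ℝ => (x : ℂ))) *ᵥ cv ⬝ᵥ cv))) := by
    simp only [hpoint]
    rw [MeasureTheory.integral_const_mul, gauss_int absJ hpos cv]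
  -- complexified quadratic form in terms of real parts
  have hcoe_dot : ∀ (M : Matrix (Fin (2*n)) (Fin (2*n)) ℝ) (x y : Fin (2*n) → ℝ),
      (M.map (fun r : ℝ => (r:ℂ))) *ᵥ (fun i => (x i : ℂ)) ⬝ᵥ (fun i => (y i : ℂ))
        = ((M *ᵥ x ⬝ᵥ y : ℝ) : ℂ) := by
    intro M x y
    simp only [Matrix.mulVec, dotProduct, Matrix.map_apply]
    push_cast
    rfl
  have hcv : cv = (fun i => ((u i : ℝ) : ℂ)) + Complex.I • (fun i => ((yv i : ℝ) : ℂ)) := by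
    funext i
    simp [hc, smul_eq_mul]
  have hBcc : ((absJ⁻¹).map (fun x : ℝ => (x : ℂ))) *ᵥ cv ⬝ᵥ cv
      = ((absJ⁻¹ *ᵥ u ⬝ᵥ u - absJ⁻¹ *ᵥ yv ⬝ᵥ yv : ℝ) : ℂ)
        + Complex.I * ((2 * (absJ⁻¹ *ᵥ u ⬝ᵥ yv) : ℝ) : ℂ) := by
    rw [hcv, Matrix.mulVec_add, Matrix.mulVec_smul, add_dotProduct,
      smul_dotProduct, dotProduct_add, dotProduct_add,
      dotProduct_smul, dotProduct_smul, hcoe_dot, hcoe_dot, hcoe_dot, hcoe_dot,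
      hsymInv yv u]
    simp only [smul_eq_mul]
    push_cast
    linear_combination ((absJ⁻¹ *ᵥ yv ⬝ᵥ yv : ℝ) : ℂ) * Complex.I_sq
  -- real quadratic identities
  have hinvu : absJ⁻¹ *ᵥ u = (2:ℝ)⁻¹ • (Zf + Z'f) := by
    rw [hu, Matrix.mulVec_smul, Matrix.mulVec_mulVec, Matrix.nonsing_inv_mul _ hdetU,
      Matrix.one_mulVec]
  have hru : absJ⁻¹ *ᵥ u ⬝ᵥ u = (1/4) * (absJ *ᵥ (Zf + Z'f) ⬝ᵥ (Zf + Z'f)) := by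
    rw [hinvu, hu, smul_dotProduct, dotProduct_smul, smul_eq_mul, smul_eq_mul,
      dotProduct_comm]
    ring
  have hinvy : absJ⁻¹ *ᵥ yv = (2:ℝ)⁻¹ • ((absJ⁻¹ * Jc) *ᵥ (Zf - Z'f)) := by
    rw [hy, Matrix.mulVec_smul, Matrix.mulVec_mulVec]
  have hry : absJ⁻¹ *ᵥ yv ⬝ᵥ yv = (1/4) * (absJ *ᵥ (Zf - Z'f) ⬝ᵥ (Zf - Z'f)) := by
    rw [hinvy, hy, smul_dotProduct, dotProduct_smul, smul_eq_mul, smul_eq_mul,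
      Matrix.dotProduct_mulVec, ← Matrix.mulVec_transpose, Matrix.mulVec_mulVec, hJAJ]
    ring
  have hruy : absJ⁻¹ *ᵥ u ⬝ᵥ yv = (1/2) * (Jc *ᵥ Zf ⬝ᵥ Z'f) := by
    rw [hinvu, hy, smul_dotProduct, dotProduct_smul, smul_eq_mul, smul_eq_mul]
    have hexpand : (Zf + Z'f) ⬝ᵥ (Jc *ᵥ (Zf - Z'f))
        = Zf ⬝ᵥ (Jc *ᵥ Zf) - Zf ⬝ᵥ (Jc *ᵥ Z'f)
          + (Z'f ⬝ᵥ (Jc *ᵥ Zf) - Z'f ⬝ᵥ (Jc *ᵥ Z'f)) := by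
      rw [Matrix.mulVec_sub, add_dotProduct, dotProduct_sub,
        dotProduct_sub]
    have e3 : Z'f ⬝ᵥ (Jc *ᵥ Zf) = -(Zf ⬝ᵥ (Jc *ᵥ Z'f)) := by
      rw [hskewd, dotProduct_comm]
    have e4 : Jc *ᵥ Zf ⬝ᵥ Z'f = -(Zf ⬝ᵥ (Jc *ᵥ Z'f)) := by
      rw [dotProduct_comm]; exact e3
    rw [hexpand, hzero Zf, hzero Z'f, e3, e4]
    ring
  -- constants
  have hDD : Real.sqrt absJ.det * Real.sqrt absJ.det = absJ.det :=
    Real.mul_self_sqrt hdet.le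
  have hsd : Real.sqrt absJ.det ≠ 0 := (Real.sqrt_pos.mpr hdet).ne'
  have hpn : ((2*Real.pi)^n : ℝ) ≠ 0 := by positivity
  have hconst : (K:ℝ)^2 * Real.sqrt ((2*Real.pi)^(2*n)/absJ.det) = K := by
    have h1 : Real.sqrt ((2*Real.pi)^(2*n)/absJ.det)
        = (2*Real.pi)^n / Real.sqrt absJ.det := by
      rw [show ((2*Real.pi)^(2*n) : ℝ) = ((2*Real.pi)^n)^2 from pow_mul' _ 2 n,
        Real.sqrt_div (by positivity) _, Real.sqrt_sq (by positivity)]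
    rw [h1, hK]
    field_simp
  -- final exponent identity (real part)
  have hR : -(1/4) * (absJ *ᵥ Zf ⬝ᵥ Zf + absJ *ᵥ Z'f ⬝ᵥ Z'f)
      + (1/2) * ((1/4) * (absJ *ᵥ (Zf + Z'f) ⬝ᵥ (Zf + Z'f))
        - (1/4) * (absJ *ᵥ (Zf - Z'f) ⬝ᵥ (Zf - Z'f)))
      = -(1/4) * (absJ *ᵥ (Zf - Z'f) ⬝ᵥ (Zf - Z'f)) := by
    rw [hqadd Zf Z'f, hqsub Zf Z'f]
    ring
  -- assemble
  rw [hint, hBcc, hru, hry, hruy, hP Z Z',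
    show (∑ i, (∑ j, absJ i j * (Z - Z') j) * (Z - Z') i)
      = absJ *ᵥ (Zf - Z'f) ⬝ᵥ (Zf - Z'f) from rfl,
    show (∑ i, (∑ j, Jc i j * Z j) * Z' i) = Jc *ᵥ Zf ⬝ᵥ Z'f from rfl,
    mul_mul_mul_comm, ← Complex.exp_add]
  congr 1
  · exact_mod_cast Complex.ofReal_inj.mpr hconst
  · congr 1
    have hRc := Complex.ofReal_inj.mpr hR
    push_cast at hRc ⊢
    linear_combination hRc
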